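/- Let I be a minimal left ideal of (C,*). Then every element of I is idempotent, and moreover for all μ, ν ∈ I one has μ*ν = μ. -/

import Mathlib

/-- `I` is a left ideal of the semigroup `(C, mul)`: a nonempty subset of `C`
closed under left multiplication by elements of `C`. -/
def IsLeftIdeal {V : Type*} (C : Set V) (mul : V → V → V) (I : Set V) : Prop :=
  I.Nonempty ∧ I ⊆ C ∧ ∀ c ∈ C, ∀ i ∈ I, mul c i ∈ I

/-- `I` is a minimal left ideal of the semigroup `(C, mul)`. -/
def IsMinimalLeftIdeal {V : Type*} (C : Set V) (mul : V → V → V) (I : Set V) : Prop :=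
  IsLeftIdeal C mul I ∧ ∀ J : Set V, IsLeftIdeal C mul J → J ⊆ I → J = I


open Filter Topology

theorem exists_fixed_of_affine {V : Type*} [AddCommGroup V] [Module ℝ V] [TopologicalSpace V]
    [IsTopologicalAddGroup V] [ContinuousSMul ℝ V] [T2Space V]
    {K : Set V} (hne : K.Nonempty) (hcomp : IsCompact K) (hconv : Convex ℝ K)
    {T : V → V} (hmaps : ∀ x ∈ K, T x ∈ K) (hcont : ContinuousOn T K)
    (haff : ∀ a ∈ K, ∀ b ∈ K, ∀ r : ℝ, 0 ≤ r → r ≤ 1 →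
      T (r • a + (1 - r) • b) = r • T a + (1 - r) • T b) :
    ∃ x ∈ K, T x = x := by
  obtain ⟨x₀, hx₀⟩ := hne
  set y : ℕ → V := fun n => T^[n] x₀ with hy
  have hyK : ∀ n, y n ∈ K := by
    intro n
    induction n with
    | zero => exact hx₀
    | succ n ih => simpa [hy, Function.iterate_succ_apply'] using hmaps _ ih
  have hysucc : ∀ n, y (n + 1) = T (y n) := by
    intro n; simp [hy, Function.iterate_succ_apply']
  set x : ℕ → V := fun n => Nat.rec x₀
    (fun n xn => (((n : ℝ) + 1) / ((n : ℝ) + 2)) • xn + (((n : ℝ) + 2))⁻¹ • y (n + 1)) n with hxdef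
  have hx0 : x 0 = x₀ := rfl
  have hxsucc : ∀ n, x (n + 1) =
      (((n : ℝ) + 1) / ((n : ℝ) + 2)) • x n + (((n : ℝ) + 2))⁻¹ • y (n + 1) := fun n => rfl
  have hn1 : ∀ n : ℕ, ((n : ℝ) + 1) ≠ 0 := fun n => by positivity
  have hn2 : ∀ n : ℕ, ((n : ℝ) + 2) ≠ 0 := fun n => by positivity
  have hr0 : ∀ n : ℕ, (0 : ℝ) ≤ ((n : ℝ) + 1) / ((n : ℝ) + 2) := fun n => by positivity
  have hr1 : ∀ n : ℕ, ((n : ℝ) + 1) / ((n : ℝ) + 2) ≤ 1 := fun n => by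
    rw [div_le_one (by positivity)]; linarith
  have h1r : ∀ n : ℕ, 1 - ((n : ℝ) + 1) / ((n : ℝ) + 2) = ((n : ℝ) + 2)⁻¹ := fun n => by
    field_simp; norm_num
  have hxK : ∀ n, x n ∈ K := by
    intro n
    induction n with
    | zero => exact hx₀
    | succ n ih =>
      rw [hxsucc, ← h1r n]
      exact hconv ih (hyK (n + 1)) (hr0 n) (by linarith [hr1 n]) (by ring)
  have hTx : ∀ n, T (x n) = x n + (((n : ℝ) + 1))⁻¹ • (y (n + 1) - y 0) := by
    intro n
    induction n with
    | zero =>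
      have h0 : y 0 = x₀ := rfl
      have h1 : y 1 = T x₀ := by rw [hysucc 0, h0]
      rw [hx0, h0, ← h1]
      simp
    | succ n ih =>
      have h2 := hn2 n
      have h1 := hn1 n
      rw [hxsucc, ← h1r n,
        haff _ (hxK n) _ (hyK (n + 1)) _ (hr0 n) (hr1 n), ih, ← hysucc (n + 1), h1r n]
      push_cast
      match_scalars <;> field_simp <;> ring
  have hbdd : Bornology.IsVonNBounded ℝ ((fun p : V × V => p.1 - p.2) '' (K ×ˢ K)) := by
    have hD : IsCompact ((fun p : V × V => p.1 - p.2) '' (K ×ˢ K)) :=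
      (hcomp.prod hcomp).image (continuous_fst.sub continuous_snd)
    letI : UniformSpace V := IsTopologicalAddGroup.rightUniformSpace V
    haveI : IsUniformAddGroup V := isUniformAddGroup_of_addCommGroup
    exact hD.totallyBounded.isVonNBounded ℝ
  have htend0 : Tendsto (fun n : ℕ => T (x n) - x n) atTop (𝓝 0) := by
    have heq : (fun n : ℕ => T (x n) - x n)
        = (fun n : ℕ => (((n : ℝ) + 1))⁻¹) • (fun n => y (n + 1) - y 0) := by
      funext n
      simp [hTx n, Pi.smul_apply']
    rw [heq]
    refine hbdd.smul_tendsto_zero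
      (Eventually.of_forall fun n => ⟨(y (n + 1), y 0), ⟨hyK _, hyK _⟩, rfl⟩) ?_
    simpa [one_div] using tendsto_one_div_add_atTop_nhds_zero_nat (𝕜 := ℝ)
  have hmapK : Filter.map x atTop ≤ 𝓟 K :=
    Filter.le_principal_iff.mpr (Filter.mem_map.mpr (Filter.Eventually.of_forall hxK))
  obtain ⟨z, hzK, hz⟩ := hcomp.exists_mapClusterPt (u := x) hmapK
  obtain ⟨U, hUle, hUtend⟩ := mapClusterPt_iff_ultrafilter.mp hz
  have hxU : Tendsto x U (𝓝[K] z) := by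
    rw [nhdsWithin, tendsto_inf]
    exact ⟨hUtend, tendsto_principal.mpr (Eventually.of_forall hxK)⟩
  have hTz : Tendsto (fun n => T (x n)) U (𝓝 (T z)) := Filter.Tendsto.comp (hcont z hzK) hxU
  have hdiff : Tendsto (fun n => T (x n) - x n) U (𝓝 (T z - z)) := hTz.sub hUtend
  have h0 : Tendsto (fun n => T (x n) - x n) U (𝓝 0) := htend0.mono_left hUle
  have hzz : T z - z = 0 := tendsto_nhds_unique hdiff h0
  exact ⟨z, hzK, by rwa [sub_eq_zero] at hzz⟩
/-- In a minimal left ideal of a compact convex left-continuous affine semigroup,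
every element is idempotent and moreover `μ * ν = μ` for all `μ, ν` in the ideal. -/
theorem minimal_left_ideal_all_idempotent
    {V : Type*} [AddCommGroup V] [Module ℝ V] [TopologicalSpace V]
    [IsTopologicalAddGroup V] [ContinuousSMul ℝ V] [T2Space V] [LocallyConvexSpace ℝ V]
    (C : Set V) (hCne : C.Nonempty) (hCcomp : IsCompact C) (hCconv : Convex ℝ C)
    (mul : V → V → V)
    (hclosed : ∀ p ∈ C, ∀ q ∈ C, mul p q ∈ C)
    (hassoc : ∀ p ∈ C, ∀ q ∈ C, ∀ r ∈ C, mul (mul p q) r = mul p (mul q r))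
    (hcont : ∀ q ∈ C, ContinuousOn (fun p => mul p q) C)
    (haffl : ∀ q ∈ C, ∀ a ∈ C, ∀ b ∈ C, ∀ r : ℝ, 0 ≤ r → r ≤ 1 →
      mul (r • a + (1 - r) • b) q = r • mul a q + (1 - r) • mul b q)
    (haffr : ∀ p ∈ C, ∀ a ∈ C, ∀ b ∈ C, ∀ r : ℝ, 0 ≤ r → r ≤ 1 →
      mul p (r • a + (1 - r) • b) = r • mul p a + (1 - r) • mul p b)
    (I : Set V) (hI : IsMinimalLeftIdeal C mul I) :
    (∀ μ ∈ I, mul μ μ = μ) ∧ (∀ μ ∈ I, ∀ ν ∈ I, mul μ ν = μ) := by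
  obtain ⟨⟨hIne, hIsub, hIid⟩, hmin⟩ := hI
  have key : ∀ ν ∈ I, ∀ μ ∈ I, mul μ ν = μ := by
    intro ν hν
    have hνC : ν ∈ C := hIsub hν
    -- `C * ν` is a left ideal contained in `I`, hence equals `I`
    set J : Set V := (fun p => mul p ν) '' C with hJ
    have hJI : J = I := by
      refine hmin J ⟨hCne.image _, ?_, ?_⟩ ?_
      · rintro _ ⟨p, hp, rfl⟩; exact hIsub (hIid p hp ν hν)
      · rintro c hc _ ⟨p, hp, rfl⟩
        exact ⟨mul c p, hclosed c hc p hp, by simpa using hassoc c hc p hp ν hνC⟩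
      · rintro _ ⟨p, hp, rfl⟩; exact hIid p hp ν hν
    -- hence `I` is compact and convex
    have hIcomp : IsCompact I := by
      rw [← hJI]; exact hCcomp.image_of_continuousOn (hcont ν hνC)
    have hIconv : Convex ℝ I := by
      rw [← hJI]
      intro u hu v hv a b ha hb hab
      obtain ⟨p, hp, rfl⟩ := hu
      obtain ⟨q, hq, rfl⟩ := hv
      have hb' : b = 1 - a := by linarith
      subst hb'
      exact ⟨a • p + (1 - a) • q, hCconv hp hq ha (by linarith) (by ring),
        haffl ν hνC p hp q hq a ha (by linarith)⟩
    -- the right-translation by `ν` has a fixed point in `I`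
    obtain ⟨μ₀, hμ₀I, hμ₀⟩ := exists_fixed_of_affine hIne hIcomp hIconv
      (T := fun μ => mul μ ν) (fun μ hμ => hIid μ (hIsub hμ) ν hν)
      ((hcont ν hνC).mono hIsub)
      (fun a ha b hb r hr0 hr1 => haffl ν hνC a (hIsub ha) b (hIsub hb) r hr0 hr1)
    -- the set of fixed points is a left ideal contained in `I`, hence equals `I`
    have hFix : {μ ∈ I | mul μ ν = μ} = I := by
      refine hmin _ ⟨⟨μ₀, hμ₀I, hμ₀⟩, fun μ hμ => hIsub hμ.1, ?_⟩ fun μ hμ => hμ.1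
      rintro c hc μ ⟨hμI, hμfix⟩
      refine ⟨hIid c hc μ hμI, ?_⟩
      rw [hassoc c hc μ (hIsub hμI) ν hνC, hμfix]
    intro μ hμ
    exact ((Set.ext_iff.mp hFix μ).mpr hμ).2
  exact ⟨fun μ hμ => key μ hμ μ hμ, fun μ hμ ν hν => key ν hν μ hμ⟩
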